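/- The direction is an invariant of (Rⁿ, R)-knots: if two continuous embeddings f, g : R → Rⁿ are ambient isotopic (via an isotopy of (R′)ⁿ, where R′ extends R by an initial open interval), then D(f) = D(g). -/

import Mathlib

open Set Topology
noncomputable section

/-- The first uncountable ordinal ω₁. -/
def omega1 : Ordinal := Ordinal.omega 1

/-- The closed long ray `R = W(ω₁) × [0,1)` with the lexicographic order. -/
def LongRay : Type 1 := {o : Ordinal // o < omega1} ×ₗ (Set.Ico (0:ℝ) 1)

instance : LinearOrder LongRay :=
  inferInstanceAs (LinearOrder ({o : Ordinal // o < omega1} ×ₗ (Set.Ico (0:ℝ) 1)))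

/-- The order topology on the long ray. -/
instance : TopologicalSpace LongRay := Preorder.topology LongRay
instance : OrderTopology LongRay := ⟨rfl⟩

/-- The minimum point `(0,0)` of the long ray. -/
instance : Zero LongRay :=
  ⟨toLex (⟨0, Ordinal.omega_pos 1⟩, ⟨0, by constructor <;> norm_num⟩)⟩

/-- A map `R → R` is cofinal if its image is unbounded in `R`. -/
def Cofinal (f : LongRay → LongRay) : Prop := ∀ b, ∃ x, b ≤ f x

/-- A map `R → R` is bounded if its image has an upper bound in `R`. -/
def BddMap (f : LongRay → LongRay) : Prop := ∃ b, ∀ x, f x ≤ b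

/-- The extended long ray `R' = ({-1} × [0,1)) ⊔ R`: the long ray with an extra
initial open interval glued below, with the order topology. -/
def LongRay' : Type 1 := (ULift.{1} (Set.Ico (0:ℝ) 1)) ⊕ₗ LongRay

instance : LinearOrder LongRay' :=
  inferInstanceAs (LinearOrder ((ULift.{1} (Set.Ico (0:ℝ) 1)) ⊕ₗ LongRay))

instance : TopologicalSpace LongRay' := Preorder.topology LongRay'
instance : OrderTopology LongRay' := ⟨rfl⟩

/-- The canonical inclusion `R ⊆ R'`. -/
def LongRay.incl (x : LongRay) : LongRay' := toLex (Sum.inr x)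
-- test basic order lemmas
section Aux
open Classical

lemma omega1_eq : omega1 = (Cardinal.aleph 1).ord := (Cardinal.ord_aleph 1).symm

lemma succ_lt_omega1 {o : Ordinal} (h : o < omega1) : o + 1 < omega1 := by
  rw [Ordinal.add_one_eq_succ]
  exact (Cardinal.isSuccLimit_omega 1).succ_lt h

/-- ordinal part -/
def LongRay.ordPart (x : LongRay) : Ordinal := ((ofLex x).1 : Ordinal)
/-- real part -/
def LongRay.rePart (x : LongRay) : ℝ := ((ofLex x).2 : ℝ)

lemma LongRay.ordPart_lt (x : LongRay) : x.ordPart < omega1 := (ofLex x).1.2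
lemma LongRay.rePart_nonneg (x : LongRay) : 0 ≤ x.rePart := (ofLex x).2.2.1
lemma LongRay.rePart_lt_one (x : LongRay) : x.rePart < 1 := (ofLex x).2.2.2

/-- point (o, 0) -/
def LongRay.mk' (o : Ordinal) (h : o < omega1) : LongRay :=
  toLex (⟨o, h⟩, ⟨0, le_refl 0, one_pos⟩)

@[simp] lemma LongRay.mk'_ordPart (o : Ordinal) (h : o < omega1) : (mk' o h).ordPart = o := rfl
@[simp] lemma LongRay.mk'_rePart (o : Ordinal) (h : o < omega1) : (mk' o h).rePart = 0 := rfl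

lemma LongRay.le_iff' {x y : LongRay} :
    x ≤ y ↔ x.ordPart < y.ordPart ∨ (x.ordPart = y.ordPart ∧ x.rePart ≤ y.rePart) := by
  constructor
  · intro h
    rcases (Prod.Lex.le_iff (x := x) (y := y)).1 h with h1 | ⟨h1, h2⟩
    · exact Or.inl h1
    · exact Or.inr ⟨congrArg Subtype.val h1, h2⟩
  · intro h
    refine (Prod.Lex.le_iff (x := x) (y := y)).2 ?_
    rcases h with h1 | ⟨h1, h2⟩
    · exact Or.inl h1
    · exact Or.inr ⟨Subtype.ext h1, h2⟩

lemma LongRay.lt_iff' {x y : LongRay} :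
    x < y ↔ x.ordPart < y.ordPart ∨ (x.ordPart = y.ordPart ∧ x.rePart < y.rePart) := by
  constructor
  · intro h
    rcases (Prod.Lex.lt_iff (x := x) (y := y)).1 h with h1 | ⟨h1, h2⟩
    · exact Or.inl h1
    · exact Or.inr ⟨congrArg Subtype.val h1, h2⟩
  · intro h
    refine (Prod.Lex.lt_iff (x := x) (y := y)).2 ?_
    rcases h with h1 | ⟨h1, h2⟩
    · exact Or.inl h1
    · exact Or.inr ⟨Subtype.ext h1, h2⟩

lemma LongRay.ordPart_mono {x y : LongRay} (h : x ≤ y) : x.ordPart ≤ y.ordPart := by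
  rcases le_iff'.1 h with h1 | ⟨h1, _⟩
  · exact h1.le
  · exact h1.le

lemma LongRay.zero_le (x : LongRay) : (0 : LongRay) ≤ x := by
  rcases eq_or_lt_of_le (_root_.zero_le : 0 ≤ x.ordPart) with h | h
  · exact le_iff'.2 (Or.inr ⟨h, x.rePart_nonneg⟩)
  · exact le_iff'.2 (Or.inl h)

lemma LongRay.mk'_le_iff {o : Ordinal} {h : o < omega1} {y : LongRay} :
    mk' o h ≤ y ↔ o ≤ y.ordPart := by
  rw [le_iff']
  constructor
  · rintro (h1 | ⟨h1, _⟩)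
    · exact le_of_lt h1
    · exact le_of_eq h1
  · intro h1
    rcases eq_or_lt_of_le h1 with h2 | h2
    · exact Or.inr ⟨h2, y.rePart_nonneg⟩
    · exact Or.inl h2

lemma LongRay.exists_gt (x : LongRay) : ∃ y, x < y := by
  refine ⟨LongRay.mk' (x.ordPart + 1) (succ_lt_omega1 x.ordPart_lt), ?_⟩
  exact lt_iff'.2 (Or.inl (lt_add_one _))

instance : NoMaxOrder LongRay := ⟨LongRay.exists_gt⟩

end Aux
section Aux2

lemma LongRay.incl_le_incl {x y : LongRay} : x.incl ≤ y.incl ↔ x ≤ y :=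
  Sum.Lex.inr_le_inr_iff

lemma LongRay.incl_lt_incl {x y : LongRay} : x.incl < y.incl ↔ x < y :=
  Sum.Lex.inr_lt_inr_iff

/-- truncation R' → R -/
def LongRay'.trunc (y : LongRay') : LongRay := Sum.elim (fun _ => (0 : LongRay)) id (ofLex y)

lemma LongRay'.le_incl_trunc (y : LongRay') : y ≤ (LongRay'.trunc y).incl := by
  rcases h : ofLex y with a | x
  · have hy : y = toLex (Sum.inl a) := by rw [← h]; rfl
    rw [hy]
    exact Sum.Lex.inl_le_inr _ _
  · have hy : y = toLex (Sum.inr x) := by rw [← h]; rfl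
    have ht : LongRay'.trunc y = x := by rw [LongRay'.trunc, h]; rfl
    rw [ht, hy]
    exact le_refl _

lemma LongRay'.exists_gt (y : LongRay') : ∃ z, y < z := by
  obtain ⟨w, hw⟩ := LongRay.exists_gt (LongRay'.trunc y)
  exact ⟨w.incl, lt_of_le_of_lt (le_incl_trunc y) (LongRay.incl_lt_incl.2 hw)⟩

instance : NoMaxOrder LongRay' := ⟨LongRay'.exists_gt⟩

lemma bddAbove_seq (u : ℕ → LongRay) : ∃ b, ∀ k, u k ≤ b := by
  set s : Ordinal := ⨆ k, (u k).ordPart with hs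
  have hslt : s < omega1 := by
    rw [omega1_eq]
    exact omega1_eq ▸ Ordinal.iSup_lt_omega_one (f := fun k => (u k).ordPart)
      (fun k => (u k).ordPart_lt)
  refine ⟨LongRay.mk' (s + 1) (succ_lt_omega1 hslt), fun k => ?_⟩
  refine LongRay.le_iff'.2 (Or.inl ?_)
  calc (u k).ordPart ≤ s := Ordinal.le_iSup (fun k => (u k).ordPart) k
  _ < s + 1 := lt_add_one _

lemma bddAbove_seq' (u : ℕ → LongRay') : ∃ b, ∀ k, u k ≤ b := by
  obtain ⟨b, hb⟩ := bddAbove_seq (fun k => LongRay'.trunc (u k))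
  exact ⟨b.incl, fun k => le_trans (LongRay'.le_incl_trunc (u k))
    (LongRay.incl_le_incl.2 (hb k))⟩

lemma exists_level {α : Type*} [LinearOrder α]
    (hbdd : ∀ u : ℕ → α, ∃ b, ∀ k, u k ≤ b)
    (ε : α → ℝ) (hε : ∀ b, 0 < ε b) :
    ∃ m : ℕ, ∀ c, ∃ b, c ≤ b ∧ 1 / ((m : ℝ) + 1) < ε b := by
  by_contra h
  push_neg at h
  choose cf hcf using h
  obtain ⟨cstar, hcstar⟩ := hbdd cf
  obtain ⟨m, hm⟩ := exists_nat_one_div_lt (hε cstar)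
  exact absurd (hcf m cstar (hcstar m)) (not_le.2 hm)

end Aux2
section Complete
open scoped Classical

lemma exists_isLUB (S : Set LongRay) (hne : S.Nonempty) (hbdd : BddAbove S) :
    ∃ s, IsLUB S s := by
  obtain ⟨b, hb⟩ := hbdd
  set A : Set Ordinal := LongRay.ordPart '' S with hA
  have hAne : A.Nonempty := hne.image _
  have hAbdd : BddAbove A := ⟨b.ordPart, by
    rintro _ ⟨x, hx, rfl⟩; exact LongRay.ordPart_mono (hb hx)⟩
  set α := sSup A with hα
  have hmemle : ∀ x ∈ S, x.ordPart ≤ α := fun x hx => le_csSup hAbdd ⟨x, hx, rfl⟩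
  have hαle : ∀ c : LongRay, c ∈ upperBounds S → α ≤ c.ordPart := fun c hc =>
    csSup_le hAne (by rintro _ ⟨x, hx, rfl⟩; exact LongRay.ordPart_mono (hc hx))
  have hα1 : α < omega1 := lt_of_le_of_lt (hαle b hb) b.ordPart_lt
  by_cases hatt : ∃ x ∈ S, x.ordPart = α
  · set B : Set ℝ := LongRay.rePart '' {x | x ∈ S ∧ x.ordPart = α} with hB
    obtain ⟨x₀, hx₀S, hx₀⟩ := hatt
    have hBne : B.Nonempty := ⟨x₀.rePart, x₀, ⟨hx₀S, hx₀⟩, rfl⟩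
    have hBmem : ∀ r ∈ B, 0 ≤ r ∧ r < 1 := by
      rintro _ ⟨x, _, rfl⟩; exact ⟨x.rePart_nonneg, x.rePart_lt_one⟩
    have hBbdd : BddAbove B := ⟨1, fun r hr => (hBmem r hr).2.le⟩
    set ρ := sSup B with hρ
    obtain ⟨r₀, hr₀⟩ := hBne
    have hρ0 : 0 ≤ ρ := le_trans (hBmem r₀ hr₀).1 (le_csSup hBbdd hr₀)
    have hρ1 : ρ ≤ 1 := csSup_le ⟨r₀, hr₀⟩ (fun r hr => (hBmem r hr).2.le)
    -- key: if c is an upper bound with c.ordPart = α then ρ ≤ c.rePart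
    have hkey : ∀ c : LongRay, c ∈ upperBounds S → c.ordPart = α → ρ ≤ c.rePart := by
      intro c hc hcα
      refine csSup_le ⟨r₀, hr₀⟩ ?_
      rintro _ ⟨x, ⟨hxS, hxα⟩, rfl⟩
      rcases LongRay.le_iff'.1 (hc hxS) with h1 | ⟨_, h2⟩
      · rw [hxα, ← hcα] at h1; exact absurd h1 (lt_irrefl _)
      · exact h2
    by_cases hρlt : ρ < 1
    · refine ⟨toLex (⟨α, hα1⟩, ⟨ρ, hρ0, hρlt⟩), ?_, ?_⟩
      · intro x hx
        rcases eq_or_lt_of_le (hmemle x hx) with heq | hlt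
        · exact LongRay.le_iff'.2 (Or.inr ⟨heq, le_csSup hBbdd ⟨x, ⟨hx, heq⟩, rfl⟩⟩)
        · exact LongRay.le_iff'.2 (Or.inl hlt)
      · intro c hc
        rcases eq_or_lt_of_le (hαle c hc) with heq | hlt
        · exact LongRay.le_iff'.2 (Or.inr ⟨heq, hkey c hc heq.symm⟩)
        · exact LongRay.le_iff'.2 (Or.inl hlt)
    · have hρeq : ρ = 1 := le_antisymm hρ1 (not_lt.1 hρlt)
      have hblt : ∀ c : LongRay, c ∈ upperBounds S → α < c.ordPart := by
        intro c hc
        rcases eq_or_lt_of_le (hαle c hc) with heq | hlt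
        · exact absurd (hρeq ▸ hkey c hc heq.symm) (not_le.2 c.rePart_lt_one)
        · exact hlt
      have hα1' : α + 1 < omega1 := succ_lt_omega1 hα1
      refine ⟨LongRay.mk' (α + 1) hα1', ?_, ?_⟩
      · intro x hx
        exact LongRay.le_iff'.2 (Or.inl (lt_of_le_of_lt (hmemle x hx) (lt_add_one _)))
      · intro c hc
        rw [LongRay.mk'_le_iff]
        rw [Ordinal.add_one_eq_succ, Order.succ_le_iff]
        exact hblt c hc
  · push_neg at hatt
    refine ⟨LongRay.mk' α hα1, ?_, ?_⟩
    · intro x hx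
      exact LongRay.le_iff'.2 (Or.inl (lt_of_le_of_ne (hmemle x hx) (hatt x hx)))
    · intro c hc
      rw [LongRay.mk'_le_iff]
      exact hαle c hc

lemma exists_isGLB (S : Set LongRay) (hne : S.Nonempty) : ∃ s, IsGLB S s := by
  set A : Set Ordinal := LongRay.ordPart '' S with hA
  obtain ⟨α, hαA, hαmin⟩ := Ordinal.lt_wf.has_min A (hne.image _)
  obtain ⟨x₀, hx₀S, hx₀⟩ := hαA
  have hα1 : α < omega1 := hx₀ ▸ x₀.ordPart_lt
  have hmemge : ∀ x ∈ S, α ≤ x.ordPart := fun x hx =>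
    not_lt.1 (hαmin x.ordPart ⟨x, hx, rfl⟩)
  set B : Set ℝ := LongRay.rePart '' {x | x ∈ S ∧ x.ordPart = α} with hB
  have hBne : B.Nonempty := ⟨x₀.rePart, x₀, ⟨hx₀S, hx₀⟩, rfl⟩
  have hBbdd : BddBelow B := ⟨0, by rintro _ ⟨x, _, rfl⟩; exact x.rePart_nonneg⟩
  set ρ := sInf B with hρ
  have hρ0 : 0 ≤ ρ := le_csInf hBne (by rintro _ ⟨x, _, rfl⟩; exact x.rePart_nonneg)
  have hρ1 : ρ < 1 := lt_of_le_of_lt (csInf_le hBbdd ⟨x₀, ⟨hx₀S, hx₀⟩, rfl⟩) x₀.rePart_lt_one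
  refine ⟨toLex (⟨α, hα1⟩, ⟨ρ, hρ0, hρ1⟩), ?_, ?_⟩
  · intro x hx
    rcases eq_or_lt_of_le (hmemge x hx) with heq | hlt
    · exact LongRay.le_iff'.2 (Or.inr ⟨heq, csInf_le hBbdd ⟨x, ⟨hx, heq.symm⟩, rfl⟩⟩)
    · exact LongRay.le_iff'.2 (Or.inl hlt)
  · intro c hc
    have hcα : c.ordPart ≤ α := hx₀ ▸ LongRay.ordPart_mono (hc hx₀S)
    rcases eq_or_lt_of_le hcα with heq | hlt
    · refine LongRay.le_iff'.2 (Or.inr ⟨heq, le_csInf hBne ?_⟩)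
      rintro _ ⟨x, ⟨hxS, hxα⟩, rfl⟩
      rcases LongRay.le_iff'.1 (hc hxS) with h1 | ⟨_, h2⟩
      · rw [hxα, ← heq] at h1; exact absurd h1 (lt_irrefl _)
      · exact h2
    · exact LongRay.le_iff'.2 (Or.inl hlt)

/-- supremum operation -/
def lrSup (S : Set LongRay) : LongRay :=
  if h : S.Nonempty ∧ BddAbove S then (exists_isLUB S h.1 h.2).choose else 0

lemma lrSup_isLUB {S : Set LongRay} (h1 : S.Nonempty) (h2 : BddAbove S) :
    IsLUB S (lrSup S) := by
  rw [lrSup, dif_pos ⟨h1, h2⟩]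
  exact (exists_isLUB S h1 h2).choose_spec

/-- infimum operation -/
def lrInf (S : Set LongRay) : LongRay :=
  if h : S.Nonempty then (exists_isGLB S h).choose else 0

lemma lrInf_isGLB {S : Set LongRay} (h1 : S.Nonempty) : IsGLB S (lrInf S) := by
  rw [lrInf, dif_pos h1]
  exact (exists_isGLB S h1).choose_spec

noncomputable instance : ConditionallyCompleteLinearOrder LongRay :=
  { (inferInstance : LinearOrder LongRay),
    (inferInstance : Lattice LongRay) with
    sSup := lrSup
    sInf := lrInf
    isLUB_csSup := fun S hne hbdd => lrSup_isLUB hne hbdd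
    isGLB_csInf := fun S hne _ => lrInf_isGLB hne
    csSup_of_not_bddAbove := fun S h => by
      show lrSup S = lrSup ∅
      simp only [lrSup]
      rw [dif_neg (fun hh => h hh.2), dif_neg (by simp)]
    csInf_of_not_bddBelow := fun S h =>
      absurd ⟨0, fun x _ => LongRay.zero_le x⟩ h }

end Complete
section Topo

lemma continuous_incl : Continuous LongRay.incl := by
  rw [show instTopologicalSpaceLongRay' =
      TopologicalSpace.generateFrom { s | ∃ a : LongRay', s = Ioi a ∨ s = Iio a } from
    OrderTopology.topology_eq_generate_intervals]
  refine continuous_generateFrom_iff.2 ?_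
  rintro s ⟨a, rfl | rfl⟩
  · rcases h : ofLex a with v | z
    · have ha : a = toLex (Sum.inl v) := by rw [← h]; rfl
      have : LongRay.incl ⁻¹' Ioi a = univ := by
        ext x
        simp only [mem_preimage, mem_Ioi, mem_univ, iff_true, ha]
        exact Sum.Lex.inl_lt_inr _ _
      rw [this]; exact isOpen_univ
    · have ha : a = toLex (Sum.inr z) := by rw [← h]; rfl
      have : LongRay.incl ⁻¹' Ioi a = Ioi z := by
        ext x
        simp only [mem_preimage, mem_Ioi, ha]
        exact Sum.Lex.inr_lt_inr_iff
      rw [this]; exact isOpen_Ioi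
  · rcases h : ofLex a with v | z
    · have ha : a = toLex (Sum.inl v) := by rw [← h]; rfl
      have : LongRay.incl ⁻¹' Iio a = ∅ := by
        ext x
        simp only [mem_preimage, mem_Iio, mem_empty_iff_false, iff_false, ha]
        exact Sum.Lex.not_inr_lt_inl
      rw [this]; exact isOpen_empty
    · have ha : a = toLex (Sum.inr z) := by rw [← h]; rfl
      have : LongRay.incl ⁻¹' Iio a = Iio z := by
        ext x
        simp only [mem_preimage, mem_Iio, ha]
        exact Sum.Lex.inr_lt_inr_iff
      rw [this]; exact isOpen_Iio

lemma bddAbove_of_isCompact {K : Set LongRay'} (hK : IsCompact K) :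
    ∃ b, ∀ y ∈ K, y ≤ b := by
  have hcover : K ⊆ ⋃ d : LongRay', Iio d := by
    intro y _
    obtain ⟨d, hd⟩ := LongRay'.exists_gt y
    exact mem_iUnion.2 ⟨d, hd⟩
  obtain ⟨s, hs⟩ := hK.elim_finite_subcover (fun d : LongRay' => Iio d)
    (fun d => isOpen_Iio) hcover
  by_cases hse : s.Nonempty
  · refine ⟨s.max' hse, fun y hy => ?_⟩
    obtain ⟨d, hd1, hd2⟩ := mem_iUnion₂.1 (hs hy)
    exact le_of_lt (lt_of_lt_of_le hd2 (s.le_max' d hd1))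
  · refine ⟨LongRay.incl 0, fun y hy => absurd (hs hy) ?_⟩
    rw [Finset.not_nonempty_iff_eq_empty.1 hse]
    simp

lemma club_inter {E₁ E₂ : Set LongRay} (h₁ : IsClosed E₁) (h₂ : IsClosed E₂)
    (hu₁ : ∀ c, ∃ x, c < x ∧ x ∈ E₁) (hu₂ : ∀ c, ∃ x, c < x ∧ x ∈ E₂) :
    (E₁ ∩ E₂).Nonempty := by
  choose g₁ hg₁lt hg₁mem using hu₁
  choose g₂ hg₂lt hg₂mem using hu₂
  let x : ℕ → LongRay := fun k => Nat.rec (g₁ 0) (fun _ p => g₁ (g₂ p)) k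
  let y : ℕ → LongRay := fun k => g₂ (x k)
  have hxmem : ∀ k, x k ∈ E₁ := by
    intro k
    cases k with
    | zero => exact hg₁mem 0
    | succ k => exact hg₁mem _
  have hymem : ∀ k, y k ∈ E₂ := fun k => hg₂mem _
  have hxy : ∀ k, x k < y k := fun k => hg₂lt (x k)
  have hyx : ∀ k, y k < x (k + 1) := fun k => hg₁lt (y k)
  have hxmono : Monotone x :=
    (strictMono_nat_of_lt_succ (fun k => (hxy k).trans (hyx k))).monotone
  have hymono : Monotone y :=
    (strictMono_nat_of_lt_succ (fun k => (hyx k).trans (hxy (k + 1)))).monotone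
  obtain ⟨b, hb⟩ := bddAbove_seq x
  have hbddx : BddAbove (range x) := ⟨b, by rintro _ ⟨k, rfl⟩; exact hb k⟩
  obtain ⟨b', hb'⟩ := bddAbove_seq y
  have hbddy : BddAbove (range y) := ⟨b', by rintro _ ⟨k, rfl⟩; exact hb' k⟩
  have hxt : Filter.Tendsto x Filter.atTop (𝓝 (⨆ k, x k)) := tendsto_atTop_ciSup hxmono hbddx
  have hyt : Filter.Tendsto y Filter.atTop (𝓝 (⨆ k, y k)) := tendsto_atTop_ciSup hymono hbddy
  have heq : (⨆ k, y k) = ⨆ k, x k :=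
    le_antisymm (ciSup_le fun k => le_trans (hyx k).le (le_ciSup hbddx (k + 1)))
      (ciSup_le fun k => le_trans (hxy k).le (le_ciSup hbddy k))
  refine ⟨⨆ k, x k, h₁.mem_of_tendsto hxt (Filter.Eventually.of_forall hxmem), ?_⟩
  exact h₂.mem_of_tendsto (heq ▸ hyt) (Filter.Eventually.of_forall hymem)

end Topo
section Main

/-- cofinality into the extended ray -/
def Cofinal' (h : LongRay → LongRay') : Prop := ∀ b, ∃ x, b ≤ h x

lemma cofinal'_incl_iff {h : LongRay → LongRay} :
    Cofinal' (fun x => (h x).incl) ↔ Cofinal h := by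
  constructor
  · intro hc b
    obtain ⟨x, hx⟩ := hc (LongRay.incl b)
    exact ⟨x, LongRay.incl_le_incl.1 hx⟩
  · intro hc b
    rcases hb : ofLex b with a | z
    · refine ⟨0, ?_⟩
      rw [show b = toLex (Sum.inl a) from by rw [← hb]; rfl]
      exact Sum.Lex.inl_le_inr _ _
    · obtain ⟨x, hx⟩ := hc z
      refine ⟨x, ?_⟩
      rw [show b = toLex (Sum.inr z) from by rw [← hb]; rfl]
      exact Sum.Lex.inr_le_inr_iff.2 hx

lemma isOpen_cofinal {F : ℝ × LongRay → LongRay'} (hF : Continuous F) :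
    IsOpen {t : ℝ | Cofinal' (fun x => F (t, x))} := by
  rw [Metric.isOpen_iff]
  intro t₀ ht₀
  have h1 : ∀ b : LongRay', ∃ x, ∃ ε : ℝ, 0 < ε ∧ ∀ t, dist t t₀ < ε → b < F (t, x) := by
    intro b
    obtain ⟨b₂, hb₂⟩ := LongRay'.exists_gt b
    obtain ⟨x, hx⟩ := ht₀ b₂
    have hopen : IsOpen {t : ℝ | F (t, x) ∈ Ioi b} :=
      (isOpen_Ioi.preimage (hF.comp (continuous_id.prodMk continuous_const)))
    have hmem : t₀ ∈ {t : ℝ | F (t, x) ∈ Ioi b} := lt_of_lt_of_le hb₂ hx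
    obtain ⟨ε, hε, hball⟩ := Metric.isOpen_iff.1 hopen t₀ hmem
    exact ⟨x, ε, hε, fun t ht => hball (Metric.mem_ball.2 ht)⟩
  choose xf εf hεpos hεprop using h1
  obtain ⟨m, hm⟩ := exists_level bddAbove_seq' εf hεpos
  refine ⟨1 / ((m : ℝ) + 1), by positivity, fun t ht => ?_⟩
  intro c
  obtain ⟨b, hcb, hεb⟩ := hm c
  exact ⟨xf b, le_of_lt (lt_of_le_of_lt hcb
    (hεprop b t (lt_trans (Metric.mem_ball.1 ht) hεb)))⟩

lemma isOpen_not_cofinal {F : ℝ × LongRay → LongRay'} (hF : Continuous F) :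
    IsOpen {t : ℝ | ¬ Cofinal' (fun x => F (t, x))} := by
  rw [Metric.isOpen_iff]
  intro t₀ ht₀
  simp only [mem_setOf_eq, Cofinal', not_forall, not_exists, not_le] at ht₀
  obtain ⟨b, hb⟩ := ht₀
  have h1 : ∀ x : LongRay, ∃ ε : ℝ, 0 < ε ∧ ∀ t, dist t t₀ < ε → F (t, x) < b := by
    intro x
    have hopen : IsOpen {t : ℝ | F (t, x) ∈ Iio b} :=
      (isOpen_Iio.preimage (hF.comp (continuous_id.prodMk continuous_const)))
    obtain ⟨ε, hε, hball⟩ := Metric.isOpen_iff.1 hopen t₀ (hb x)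
    exact ⟨ε, hε, fun t ht => hball (Metric.mem_ball.2 ht)⟩
  choose εf hεpos hεprop using h1
  obtain ⟨m, hm⟩ := exists_level bddAbove_seq εf hεpos
  refine ⟨1 / ((m : ℝ) + 1), by positivity, fun t ht => ?_⟩
  intro hcof
  have hFt : Continuous (fun x => F (t, x)) :=
    hF.comp (continuous_const.prodMk continuous_id)
  obtain ⟨b₂, hb₂⟩ := LongRay'.exists_gt b
  set E₁ : Set LongRay := (fun x => F (t, x)) ⁻¹' (Ici b₂) with hE₁
  have hE₁closed : IsClosed E₁ := isClosed_Ici.preimage hFt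
  have hE₂unb : ∀ c, ∃ x, c < x ∧ x ∈ (fun x => F (t, x)) ⁻¹' (Iic b) := by
    intro c
    obtain ⟨c', hc'⟩ := LongRay.exists_gt c
    obtain ⟨x, hcx, hεx⟩ := hm c'
    exact ⟨x, lt_of_lt_of_le hc' hcx,
      le_of_lt (hεprop x t (lt_trans (Metric.mem_ball.1 ht) hεx))⟩
  by_cases hE₁unb : ∀ c, ∃ x, c < x ∧ x ∈ E₁
  · obtain ⟨z, hz₁, hz₂⟩ := club_inter hE₁closed (isClosed_Iic.preimage hFt) hE₁unb hE₂unb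
    exact absurd ((hb₂.trans_le hz₁).trans_le hz₂) (lt_irrefl b)
  · push_neg at hE₁unb
    obtain ⟨c, hc⟩ := hE₁unb
    obtain ⟨b₃, hb₃⟩ := bddAbove_of_isCompact ((isCompact_Icc (a := (0 : LongRay)) (b := c)).image hFt)
    obtain ⟨b₄, hb₄⟩ := LongRay'.exists_gt (max b₂ b₃)
    obtain ⟨x, hx⟩ := hcof b₄
    have hbound : F (t, x) ≤ max b₂ b₃ := by
      by_cases hxc : x ≤ c
      · exact le_trans (hb₃ _ ⟨x, ⟨LongRay.zero_le x, hxc⟩, rfl⟩) (le_max_right _ _)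
      · have hnm := hc x (not_le.1 hxc)
        rw [hE₁, mem_preimage, mem_Ici] at hnm
        exact le_trans (le_of_lt (not_le.1 hnm)) (le_max_left _ _)
    exact absurd (hx.trans hbound) (not_le.2 hb₄)

end Main
/-- The direction is an invariant of `(Rⁿ,R)`-knots: if two continuous embeddings
`f g : R → Rⁿ` are ambient isotopic through an isotopy of `(R')ⁿ`, then for each
coordinate `i`, `πᵢ ∘ f` is cofinal iff `πᵢ ∘ g` is. -/
theorem direction_is_knot_invariant (n : ℕ)
    (f g : LongRay → Fin n → LongRay)
    (hf : Topology.IsEmbedding f) (hg : Topology.IsEmbedding g)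
    (φ : ℝ → (Fin n → LongRay') → (Fin n → LongRay'))
    (hφcont : Continuous fun p : ℝ × (Fin n → LongRay') => φ p.1 p.2)
    (hφhomeo : ∀ t ∈ Set.Icc (0:ℝ) 1, IsHomeomorph (φ t))
    (hφ0 : φ 0 = id)
    (hφ1 : ∀ x, φ 1 (fun i => LongRay.incl (f x i)) = fun i => LongRay.incl (g x i)) :
    ∀ i : Fin n, Cofinal (fun x => f x i) ↔ Cofinal (fun x => g x i) := by
  intro i
  set F : ℝ × LongRay → LongRay' :=
    fun p => φ p.1 (fun j => LongRay.incl (f p.2 j)) i with hFdef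
  have hF : Continuous F := by
    have hpair : Continuous fun p : ℝ × LongRay =>
        ((p.1, fun j => LongRay.incl (f p.2 j)) : ℝ × (Fin n → LongRay')) :=
      continuous_fst.prodMk (continuous_pi fun j =>
        continuous_incl.comp ((continuous_apply j).comp (hf.continuous.comp continuous_snd)))
    exact (continuous_apply i).comp (hφcont.comp hpair)
  set C : Set ℝ := {t : ℝ | Cofinal' (fun x => F (t, x))} with hC
  have hopen : IsOpen C := isOpen_cofinal hF
  have hclosed : IsClosed C := by
    rw [← isOpen_compl_iff, hC, compl_setOf]
    exact isOpen_not_cofinal hF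
  have h01 : (0 : ℝ) ∈ C ↔ (1 : ℝ) ∈ C := by
    rcases isClopen_iff.1 ⟨hclosed, hopen⟩ with h | h <;> simp [h]
  have hF0 : (fun x => F (0, x)) = fun x => (f x i).incl := by
    funext x
    show φ 0 _ i = _
    rw [hφ0]
    rfl
  have hF1 : (fun x => F (1, x)) = fun x => (g x i).incl := by
    funext x
    show φ 1 _ i = _
    rw [hφ1 x]
  have e0 : Cofinal (fun x => f x i) ↔ (0 : ℝ) ∈ C := by
    rw [hC, mem_setOf_eq, hF0, cofinal'_incl_iff]
  have e1 : Cofinal (fun x => g x i) ↔ (1 : ℝ) ∈ C := by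
    rw [hC, mem_setOf_eq, hF1, cofinal'_incl_iff]
  rw [e0, e1]
  exact h01
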